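/- Let 𝒜 and ℬ be two finite σ-structures. The following are equivalent: (i) every {∃,∀,∧,∨}-FO sentence true in 𝒜 is true in ℬ; (ii) there exists a surjective hyper-morphism from 𝒜 to ℬ. -/

import Mathlib

namespace MC

/-- Which logical symbols (beyond ∃, ∧ and relational atoms) are allowed. -/
structure Frag where
  eq : Bool
  ne : Bool
  neg : Bool
  orF : Bool
  allF : Bool

/-- Formulas over a relational signature `σ` (with arities `ar`) in the syntactic
fragment `F`, with `n` free variables (de Bruijn style, quantifiers bind the last
variable). Atomic relational formulas, conjunction and existential quantification
are always allowed; the other symbols only if enabled in `F`. -/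
inductive Fml (σ : Type) (ar : σ → ℕ) (F : Frag) : ℕ → Type
  | rel {n : ℕ} (r : σ) (v : Fin (ar r) → Fin n) : Fml σ ar F n
  | equal {n : ℕ} (h : F.eq = true) (i j : Fin n) : Fml σ ar F n
  | nequal {n : ℕ} (h : F.ne = true) (i j : Fin n) : Fml σ ar F n
  | fnot {n : ℕ} (h : F.neg = true) (φ : Fml σ ar F n) : Fml σ ar F n
  | fand {n : ℕ} (φ ψ : Fml σ ar F n) : Fml σ ar F n
  | forr {n : ℕ} (h : F.orF = true) (φ ψ : Fml σ ar F n) : Fml σ ar F n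
  | fex {n : ℕ} (φ : Fml σ ar F (n + 1)) : Fml σ ar F n
  | fall {n : ℕ} (h : F.allF = true) (φ : Fml σ ar F (n + 1)) : Fml σ ar F n

/-- Satisfaction of a formula in a structure with domain `A` and
interpretation `I`, under a valuation of the free variables. -/
def Sat {σ : Type} {ar : σ → ℕ} {F : Frag} {A : Type}
    (I : ∀ r : σ, (Fin (ar r) → A) → Prop) :
    ∀ {n : ℕ}, Fml σ ar F n → (Fin n → A) → Prop
  | _, .rel r v, val => I r fun i => val (v i)
  | _, .equal _ i j, val => val i = val j
  | _, .nequal _ i j, val => val i ≠ val j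
  | _, .fnot _ φ, val => ¬ Sat I φ val
  | _, .fand φ ψ, val => Sat I φ val ∧ Sat I ψ val
  | _, .forr _ φ ψ, val => Sat I φ val ∨ Sat I ψ val
  | _, .fex φ, val => ∃ a : A, Sat I φ (Fin.snoc val a)
  | _, .fall _ φ, val => ∀ a : A, Sat I φ (Fin.snoc val a)

end MC

namespace MC

/-- `f : A → Set B` is a hyper-morphism from `(A, IA)` to `(B, IB)`:
it is total (nonempty images) and preserves all relations. -/
def IsHyperMorphism {σ : Type} {ar : σ → ℕ} {A B : Type}
    (IA : ∀ r : σ, (Fin (ar r) → A) → Prop)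
    (IB : ∀ r : σ, (Fin (ar r) → B) → Prop) (f : A → Set B) : Prop :=
  (∀ a : A, (f a).Nonempty) ∧
  ∀ (r : σ) (t : Fin (ar r) → A), IA r t →
    ∀ s : Fin (ar r) → B, (∀ i, s i ∈ f (t i)) → IB r s

/-- A hyper-operation `f : A → Set B` is surjective if every element of `B`
lies in the image of some element of `A`. -/
def HyperSurjective {A B : Type} (f : A → Set B) : Prop :=
  ∀ b : B, ∃ a : A, b ∈ f a

/-- A hyper-morphism is full if membership of images exactly reflects the relations. -/
def IsFull {σ : Type} {ar : σ → ℕ} {A B : Type}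
    (IA : ∀ r : σ, (Fin (ar r) → A) → Prop)
    (IB : ∀ r : σ, (Fin (ar r) → B) → Prop) (f : A → Set B) : Prop :=
  ∀ (r : σ) (t : Fin (ar r) → A) (s : Fin (ar r) → B),
    (∀ i, s i ∈ f (t i)) → (IA r t ↔ IB r s)

end MC

namespace MC

/-- The fragment {∃,∀,∧,∨}-FO: positive equality-free logic. -/
def posFrag : Frag := ⟨false, false, false, true, true⟩

section Aux

variable {σ : Type} {ar : σ → ℕ} {F : Frag}

/-- Iterated existential quantification. -/
def iterEx {n : ℕ} : ∀ (k : ℕ), Fml σ ar F (n + k) → Fml σ ar F n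
  | 0, φ => φ
  | k+1, φ => iterEx k (.fex φ)

/-- Iterated universal quantification. -/
def iterAll (h : F.allF = true) {n : ℕ} : ∀ (k : ℕ), Fml σ ar F (n + k) → Fml σ ar F n
  | 0, φ => φ
  | k+1, φ => iterAll h k (.fall h φ)

/-- Conjunction of a head formula and a list of formulas. -/
def bigAnd {n : ℕ} (φ : Fml σ ar F n) : List (Fml σ ar F n) → Fml σ ar F n
  | [] => φ
  | ψ :: l => .fand ψ (bigAnd φ l)

/-- Disjunction of a head formula and a list of formulas. -/
def bigOr (h : F.orF = true) {n : ℕ} (φ : Fml σ ar F n) : List (Fml σ ar F n) → Fml σ ar F n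
  | [] => φ
  | ψ :: l => .forr h ψ (bigOr h φ l)

/-- Conjunction over a finite index type (plus a head formula). -/
noncomputable def andOver {n : ℕ} {ι : Type} [Fintype ι] (φ : Fml σ ar F n)
    (g : ι → Fml σ ar F n) : Fml σ ar F n :=
  bigAnd φ ((Finset.univ : Finset ι).toList.map g)

/-- Disjunction over a finite index type (plus a head formula). -/
noncomputable def orOver (h : F.orF = true) {n : ℕ} {ι : Type} [Fintype ι] (φ : Fml σ ar F n)
    (g : ι → Fml σ ar F n) : Fml σ ar F n :=
  bigOr h φ ((Finset.univ : Finset ι).toList.map g)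

variable {D : Type} (I : ∀ r : σ, (Fin (ar r) → D) → Prop)

lemma sat_bigAnd {n : ℕ} (φ : Fml σ ar F n) (l : List (Fml σ ar F n)) (val : Fin n → D) :
    Sat I (bigAnd φ l) val ↔ Sat I φ val ∧ ∀ ψ ∈ l, Sat I ψ val := by
  induction l with
  | nil => simp [bigAnd]
  | cons ψ l ih =>
    simp only [bigAnd, Sat, ih, List.mem_cons]
    constructor
    · rintro ⟨h1, h2, h3⟩
      exact ⟨h2, fun χ hχ => hχ.elim (fun e => e ▸ h1) (h3 χ)⟩
    · rintro ⟨h1, h2⟩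
      exact ⟨h2 ψ (Or.inl rfl), h1, fun χ hχ => h2 χ (Or.inr hχ)⟩

lemma sat_bigOr (h : F.orF = true) {n : ℕ} (φ : Fml σ ar F n) (l : List (Fml σ ar F n))
    (val : Fin n → D) :
    Sat I (bigOr h φ l) val ↔ Sat I φ val ∨ ∃ ψ ∈ l, Sat I ψ val := by
  induction l with
  | nil => simp [bigOr]
  | cons ψ l ih =>
    simp only [bigOr, Sat, ih, List.mem_cons]
    constructor
    · rintro (h1 | h2 | ⟨χ, hχ, h3⟩)
      · exact Or.inr ⟨ψ, Or.inl rfl, h1⟩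
      · exact Or.inl h2
      · exact Or.inr ⟨χ, Or.inr hχ, h3⟩
    · rintro (h1 | ⟨χ, (rfl | hχ), h3⟩)
      · exact Or.inr (Or.inl h1)
      · exact Or.inl h3
      · exact Or.inr (Or.inr ⟨χ, hχ, h3⟩)

lemma sat_andOver {n : ℕ} {ι : Type} [Fintype ι] (φ : Fml σ ar F n)
    (g : ι → Fml σ ar F n) (val : Fin n → D) :
    Sat I (andOver φ g) val ↔ Sat I φ val ∧ ∀ i : ι, Sat I (g i) val := by
  rw [andOver, sat_bigAnd]
  simp

lemma sat_orOver (h : F.orF = true) {n : ℕ} {ι : Type} [Fintype ι] (φ : Fml σ ar F n)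
    (g : ι → Fml σ ar F n) (val : Fin n → D) :
    Sat I (orOver h φ g) val ↔ Sat I φ val ∨ ∃ i : ι, Sat I (g i) val := by
  rw [orOver, sat_bigOr]
  simp

lemma sat_iterEx {n : ℕ} : ∀ (k : ℕ) (φ : Fml σ ar F (n + k)) (val : Fin n → D),
    Sat I (iterEx k φ) val ↔ ∃ e : Fin k → D, Sat I φ (Fin.append val e)
  | 0, φ, val => by
    constructor
    · intro hs
      refine ⟨Fin.elim0, ?_⟩
      have : Fin.append val (Fin.elim0 : Fin 0 → D) = val := by
        funext i; simp [Fin.append_elim0]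
      rwa [this]
    · rintro ⟨e, he⟩
      have : e = Fin.elim0 := funext fun i => i.elim0
      subst this
      have : Fin.append val (Fin.elim0 : Fin 0 → D) = val := by
        funext i; simp [Fin.append_elim0]
      rwa [this] at he
  | k+1, φ, val => by
    rw [iterEx, sat_iterEx k]
    constructor
    · rintro ⟨e, a, ha⟩
      refine ⟨Fin.snoc e a, ?_⟩
      rwa [Fin.append_snoc]
    · rintro ⟨e, he⟩
      refine ⟨Fin.init e, e (Fin.last k), ?_⟩
      rw [show Fin.snoc (Fin.append val (Fin.init e)) (e (Fin.last k))
            = Fin.append val (Fin.snoc (Fin.init e) (e (Fin.last k))) from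
          (Fin.append_snoc _ _ _).symm, Fin.snoc_init_self]
      exact he

lemma sat_iterAll (h : F.allF = true) {n : ℕ} :
    ∀ (k : ℕ) (φ : Fml σ ar F (n + k)) (val : Fin n → D),
    Sat I (iterAll h k φ) val ↔ ∀ e : Fin k → D, Sat I φ (Fin.append val e)
  | 0, φ, val => by
    have hv : Fin.append val (Fin.elim0 : Fin 0 → D) = val := by
      funext i; simp [Fin.append_elim0]
    constructor
    · intro hs e
      have : e = Fin.elim0 := funext fun i => i.elim0
      subst this; rwa [hv]
    · intro hs
      have := hs Fin.elim0
      rwa [hv] at this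
  | k+1, φ, val => by
    rw [iterAll, sat_iterAll h k]
    constructor
    · intro hs e
      have := hs (Fin.init e) (e (Fin.last k))
      rwa [show Fin.snoc (Fin.append val (Fin.init e)) (e (Fin.last k))
            = Fin.append val (Fin.snoc (Fin.init e) (e (Fin.last k))) from
          (Fin.append_snoc _ _ _).symm, Fin.snoc_init_self] at this
    · intro hs e a
      have := hs (Fin.snoc e a)
      rwa [Fin.append_snoc] at this

end Aux

section Hyper

variable {σ : Type} {ar : σ → ℕ} {A B : Type}
  (IA : ∀ r : σ, (Fin (ar r) → A) → Prop) (IB : ∀ r : σ, (Fin (ar r) → B) → Prop)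
  (f : A → Set B)

lemma sat_of_hyper (hf : IsHyperMorphism IA IB f) (hs : HyperSurjective f)
    {k : ℕ} (φ : Fml σ ar posFrag k) :
    ∀ (vA : Fin k → A) (vB : Fin k → B),
      (∀ i, vB i ∈ f (vA i)) → Sat IA φ vA → Sat IB φ vB := by
  induction φ with
  | rel r v =>
    intro vA vB hv hsat
    exact hf.2 r (fun i => vA (v i)) hsat _ (fun i => hv (v i))
  | equal h => simp [posFrag] at h
  | nequal h => simp [posFrag] at h
  | fnot h => simp [posFrag] at h
  | fand φ ψ ihφ ihψ =>
    intro vA vB hv hsat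
    exact ⟨ihφ _ _ hv hsat.1, ihψ _ _ hv hsat.2⟩
  | forr h φ ψ ihφ ihψ =>
    intro vA vB hv hsat
    cases hsat with
    | inl hl => exact Or.inl (ihφ _ _ hv hl)
    | inr hr => exact Or.inr (ihψ _ _ hv hr)
  | fex φ ih =>
    rintro vA vB hv ⟨a, ha⟩
    obtain ⟨b, hb⟩ := hf.1 a
    refine ⟨b, ih _ _ ?_ ha⟩
    intro i
    induction i using Fin.lastCases with
    | last => simpa using hb
    | cast i => simpa using hv i
  | fall h φ ih =>
    intro vA vB hv hsat b
    obtain ⟨a, hab⟩ := hs b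
    refine ih _ _ ?_ (hsat a)
    intro i
    induction i using Fin.lastCases with
    | last => simpa using hab
    | cast i => simpa using hv i

end Hyper

section Canon

variable {σ : Type} {ar : σ → ℕ} {A : Type}

/-- Index data for an atom of the canonical sentence: a relation symbol, a tuple
witnessing it in `𝒜`, and for each coordinate either `none` (meaning: use the
existential variable of that element) or `some j` (use the `j`-th universal variable). -/
abbrev AtomData (σ : Type) (ar : σ → ℕ) (A : Type) (nb : ℕ) : Type :=
  Σ r : σ, (Fin (ar r) → A) × (Fin (ar r) → Option (Fin nb))

instance [Finite σ] [Finite A] {nb : ℕ} : Finite (AtomData σ ar A nb) := by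
  unfold AtomData; infer_instance

variable {m nb : ℕ}

/-- The atomic formula corresponding to an atom datum.  Among the free variables,
the first `nb` are the universal ones, the last `m` are the existential ones. -/
def atomFml (eA : A ≃ Fin m) (p : AtomData σ ar A nb) : Fml σ ar posFrag (0 + nb + m) :=
  .rel p.1 fun i => match p.2.2 i with
    | none => Fin.natAdd (0 + nb) (eA (p.2.1 i))
    | some j => Fin.castAdd m (Fin.natAdd 0 j)

/-- An atom datum is admissible for `U` if its tuple holds in `𝒜` and all its
universal-variable choices respect `U`. -/
def OkAtom (IA : ∀ r : σ, (Fin (ar r) → A) → Prop) (U : A → Finset (Fin nb))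
    (p : AtomData σ ar A nb) : Prop :=
  IA p.1 p.2.1 ∧ ∀ i j, p.2.2 i = some j → j ∈ U (p.2.1 i)

lemma sat_atomFml {D : Type} (I : ∀ r : σ, (Fin (ar r) → D) → Prop)
    (eA : A ≃ Fin m) (p : AtomData σ ar A nb)
    (z : Fin 0 → D) (ys : Fin nb → D) (xs : Fin m → D) :
    Sat I (atomFml eA p) (Fin.append (Fin.append z ys) xs) ↔
      I p.1 (fun i => match p.2.2 i with
        | none => xs (eA (p.2.1 i))
        | some j => ys j) := by
  have hfun : (fun i => (Fin.append (Fin.append z ys) xs)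
        (match p.2.2 i with
          | none => Fin.natAdd (0 + nb) (eA (p.2.1 i))
          | some j => Fin.castAdd m (Fin.natAdd 0 j)))
      = fun i => match p.2.2 i with
        | none => xs (eA (p.2.1 i))
        | some j => ys j := by
    funext i
    cases h : p.2.2 i with
    | none => simp only [h, Fin.append_right]
    | some j => simp only [h, Fin.append_left, Fin.append_right]
  simp only [atomFml, Sat, hfun]

variable [Finite σ] [Finite A]

/-- The disjunct of the canonical sentence corresponding to a family `U`. -/
noncomputable def disjFml (eA : A ≃ Fin m) (IA : ∀ r : σ, (Fin (ar r) → A) → Prop)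
    (r₀ : σ) (t₀ : Fin (ar r₀) → A) (U : A → Finset (Fin nb)) :
    Fml σ ar posFrag (0 + nb + m) :=
  letI : Fintype {p : AtomData σ ar A nb // OkAtom IA U p} := Fintype.ofFinite _
  andOver (atomFml eA ⟨r₀, t₀, fun _ => none⟩)
    (fun p : {p : AtomData σ ar A nb // OkAtom IA U p} => atomFml eA p.1)

/-- A family `U` covers `Fin nb` if every index belongs to some `U a`. -/
def Covers (U : A → Finset (Fin nb)) : Prop := ∀ j : Fin nb, ∃ a : A, j ∈ U a

theorem posFrag_allF : posFrag.allF = true := rfl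

theorem posFrag_orF : posFrag.orF = true := rfl

/-- The canonical {∃,∀,∧,∨} sentence of `𝒜`. -/
noncomputable def canonFml (eA : A ≃ Fin m) (IA : ∀ r : σ, (Fin (ar r) → A) → Prop)
    (r₀ : σ) (t₀ : Fin (ar r₀) → A) (nb : ℕ) : Fml σ ar posFrag 0 :=
  letI : Fintype {U : A → Finset (Fin nb) // Covers U} := Fintype.ofFinite _
  iterAll posFrag_allF nb (iterEx m
    (orOver posFrag_orF (disjFml eA IA r₀ t₀ (fun _ => (Finset.univ : Finset (Fin nb))))
      (fun U : {U : A → Finset (Fin nb) // Covers U} => disjFml eA IA r₀ t₀ U.1)))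

/-- The canonical sentence is true in `𝒜`. -/
lemma sat_canonFml (eA : A ≃ Fin m) (IA : ∀ r : σ, (Fin (ar r) → A) → Prop)
    {r₀ : σ} {t₀ : Fin (ar r₀) → A} (h₀ : IA r₀ t₀) (nb : ℕ) :
    Sat IA (canonFml eA IA r₀ t₀ nb) Fin.elim0 := by
  classical
  letI : Fintype {U : A → Finset (Fin nb) // Covers U} := Fintype.ofFinite _
  rw [canonFml, sat_iterAll]
  intro ys
  rw [sat_iterEx]
  refine ⟨fun i => eA.symm i, ?_⟩
  rw [sat_orOver]
  right
  refine ⟨⟨fun a => Finset.univ.filter (fun j => ys j = a),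
    fun j => ⟨ys j, by simp⟩⟩, ?_⟩
  rw [disjFml]
  letI : Fintype {p : AtomData σ ar A nb // OkAtom IA
      (fun a => Finset.univ.filter (fun j => ys j = a)) p} := Fintype.ofFinite _
  rw [sat_andOver]
  constructor
  · rw [sat_atomFml]
    have : (fun i => (fun i' => eA.symm i') (eA (t₀ i))) = t₀ := by
      funext i; simp
    simpa [this] using h₀
  · rintro ⟨p, hp1, hp2⟩
    rw [sat_atomFml]
    have : (fun i => match p.2.2 i with
        | none => (fun i' => eA.symm i') (eA (p.2.1 i))
        | some j => ys j) = p.2.1 := by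
      funext i
      cases h : p.2.2 i with
      | none => simp
      | some j =>
        have := hp2 i j h
        simp only [Finset.mem_filter] at this
        simpa using this.2
    rwa [this]

/-- Extracting a surjective hyper-morphism from the truth of the canonical sentence. -/
lemma hyper_of_sat_canonFml {B : Type} [Nonempty A] (eA : A ≃ Fin m) (eB : B ≃ Fin nb)
    (IA : ∀ r : σ, (Fin (ar r) → A) → Prop) (IB : ∀ r : σ, (Fin (ar r) → B) → Prop)
    {r₀ : σ} {t₀ : Fin (ar r₀) → A}
    (hsat : Sat IB (canonFml eA IA r₀ t₀ nb) Fin.elim0) :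
    ∃ f : A → Set B, IsHyperMorphism IA IB f ∧ HyperSurjective f := by
  classical
  letI : Fintype {U : A → Finset (Fin nb) // Covers U} := Fintype.ofFinite _
  rw [canonFml, sat_iterAll] at hsat
  have h1 := hsat (fun j => eB.symm j)
  rw [sat_iterEx] at h1
  obtain ⟨xs, h2⟩ := h1
  rw [sat_orOver] at h2
  obtain ⟨U, hcov, hall⟩ : ∃ U : A → Finset (Fin nb), Covers U ∧
      ∀ p : AtomData σ ar A nb, OkAtom IA U p →
        Sat IB (atomFml eA p)
          (Fin.append (Fin.append (Fin.elim0 : Fin 0 → B) (fun j => eB.symm j)) xs) := by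
    cases h2 with
    | inl h =>
      rw [disjFml] at h
      letI : Fintype {p : AtomData σ ar A nb // OkAtom IA
          (fun _ => (Finset.univ : Finset (Fin nb))) p} := Fintype.ofFinite _
      rw [sat_andOver] at h
      exact ⟨fun _ => Finset.univ, fun j => ⟨Classical.arbitrary A, by simp⟩,
        fun p hp => h.2 ⟨p, hp⟩⟩
    | inr h =>
      obtain ⟨⟨U, hU⟩, h⟩ := h
      rw [disjFml] at h
      letI : Fintype {p : AtomData σ ar A nb // OkAtom IA U p} := Fintype.ofFinite _
      rw [sat_andOver] at h
      exact ⟨U, hU, fun p hp => h.2 ⟨p, hp⟩⟩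
  refine ⟨fun a => insert (xs (eA a)) {b : B | ∃ j ∈ U a, eB.symm j = b}, ⟨?_, ?_⟩, ?_⟩
  · exact fun a => ⟨xs (eA a), Set.mem_insert _ _⟩
  · intro r t ht s hs
    have hchoice : ∀ i, ∃ o : Option (Fin nb),
        (∀ j, o = some j → j ∈ U (t i) ∧ eB.symm j = s i) ∧
        (o = none → s i = xs (eA (t i))) := by
      intro i
      rcases Set.mem_insert_iff.mp (hs i) with h | h
      · exact ⟨none, by simp, fun _ => h⟩
      · obtain ⟨j, hj1, hj2⟩ := h
        refine ⟨some j, ?_, by simp⟩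
        rintro j' hj'
        cases hj'
        exact ⟨hj1, hj2⟩
    choose c hc1 hc2 using hchoice
    have := hall ⟨r, t, c⟩ ⟨ht, fun i j h => (hc1 i j h).1⟩
    rw [sat_atomFml] at this
    have hfun : (fun i => match c i with
        | none => xs (eA (t i))
        | some j => eB.symm j) = s := by
      funext i
      cases h : c i with
      | none => exact ((hc2 i h)).symm
      | some j => exact (hc1 i j h).2
    rwa [hfun] at this
  · intro b
    obtain ⟨a, ha⟩ := hcov (eB b)
    exact ⟨a, Set.mem_insert_iff.mpr (Or.inr ⟨eB b, ha, by simp⟩)⟩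

end Canon

/-- {∃,∀,∧,∨}-FO containment is characterised by surjective hyper-morphism. -/
theorem pos_containment_iff_surjective_hyper {σ : Type} [Finite σ] (ar : σ → ℕ)
    {A B : Type} [Finite A] [Finite B] [Nonempty A] [Nonempty B]
    (IA : ∀ r : σ, (Fin (ar r) → A) → Prop)
    (IB : ∀ r : σ, (Fin (ar r) → B) → Prop) :
    (∀ φ : Fml σ ar posFrag 0, Sat IA φ Fin.elim0 → Sat IB φ Fin.elim0) ↔
      ∃ f : A → Set B, IsHyperMorphism IA IB f ∧ HyperSurjective f := by
  constructor
  · intro hcont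
    by_cases hA : ∃ r : σ, ∃ t : Fin (ar r) → A, IA r t
    · obtain ⟨r₀, t₀, h₀⟩ := hA
      letI : Fintype A := Fintype.ofFinite A
      letI : Fintype B := Fintype.ofFinite B
      exact hyper_of_sat_canonFml (Fintype.equivFin A) (Fintype.equivFin B) IA IB
        (hcont _ (sat_canonFml (Fintype.equivFin A) IA h₀ (Fintype.card B)))
    · exact ⟨fun _ => Set.univ, ⟨fun a => ⟨Classical.arbitrary B, trivial⟩,
        fun r t hrt => absurd ⟨r, t, hrt⟩ hA⟩, fun b => ⟨Classical.arbitrary A, trivial⟩⟩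
  · rintro ⟨f, hf, hs⟩ φ hφ
    exact sat_of_hyper IA IB f hf hs φ _ _ (fun i => i.elim0) hφ

end MC
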